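/- Suppose n ≥ 3, A is an arm sequence, and λ is an A-regular partition with λ ≠ ∅. Then there exists i ∈ ℤ/nℤ such that ẽ_i λ ≠ 0; that is, λ has a good node of some residue. -/

import Mathlib

/-!  Partitions, arm sequences and the crystal operators `ẽ_i`, `f̃_i` of the paper
"Partition models for the crystal of the basic `U_q(ŝl_n)`-module".

A partition is modelled as a function `l : ℕ → ℕ` listing the parts, with rows indexed
from `0`; the Young diagram consists of the nodes `(a, c)` (row `a`, column `c`, both
`0`-indexed) with `c < l a`.  The node `(a, c)` here corresponds to the node
`(a + 1, c + 1)` in the (1-indexed) conventions of the paper; in particular its residue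
is `c - a (mod n)`, its arm length is `l a - c - 1`, and its hook length is
`l a - c + l' c - a - 1`, where `l'` is the conjugate partition. -/

attribute [local instance] Classical.propDecidable

namespace ArmCrystal

/-- `l` is a partition: weakly decreasing with some part equal to `0`. -/
def IsPartition (l : ℕ → ℕ) : Prop := (∀ a, l (a + 1) ≤ l a) ∧ ∃ N, l N = 0

/-- The conjugate partition: `conj l c` is the number of rows `a` with `l a > c`,
i.e. the number of nodes in column `c`. -/
noncomputable def conj (l : ℕ → ℕ) (c : ℕ) : ℕ := sInf {a | l a ≤ c}

/-- `A` is an arm sequence for `n`: `t - 1 ≤ A t ≤ (n-1)t` for `t ≥ 1`, and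
`A (t + u) ∈ {A t + A u, A t + A u + 1}`.  (The value `A 0` is irrelevant; in the
definition of the order on nodes it is read as `0`, via `Aext`.) -/
def IsArmSeq (n : ℕ) (A : ℕ → ℤ) : Prop :=
  (∀ t : ℕ, 1 ≤ t → (t : ℤ) - 1 ≤ A t ∧ A t ≤ ((n : ℤ) - 1) * t) ∧
  (∀ t u : ℕ, 1 ≤ t → 1 ≤ u → A (t + u) = A t + A u ∨ A (t + u) = A t + A u + 1)

/-- `A` extended by `A 0 = 0`. -/
def Aext (A : ℕ → ℤ) (t : ℕ) : ℤ := if t = 0 then 0 else A t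

/-- The `(a, c)`-hook of `l` is illegal with parameter `t ≥ 1`: `(a, c)` is a node of
`l` whose hook length is `n * t` and whose arm length is `A t`. -/
def IllegalHook (n : ℕ) (A : ℕ → ℤ) (l : ℕ → ℕ) (a c t : ℕ) : Prop :=
  1 ≤ t ∧ c < l a ∧
  ((l a : ℤ) + conj l c = (n : ℤ) * t + a + c + 1) ∧
  ((l a : ℤ) = A t + c + 1)

/-- `l` is `A`-regular: it has no illegal hook. -/
def ARegular (n : ℕ) (A : ℕ → ℤ) (l : ℕ → ℕ) : Prop :=
  ¬ ∃ a c t, IllegalHook n A l a c t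

/-- `(a, c)` is a removable node of `l`. -/
def Removable (l : ℕ → ℕ) (a c : ℕ) : Prop := l a = c + 1 ∧ l (a + 1) ≤ c

/-- `(a, c)` is an addable node of `l`. -/
def Addable (l : ℕ → ℕ) (a c : ℕ) : Prop := l a = c ∧ (a = 0 ∨ c < l (a - 1))

/-- The residue of the node `(a, c)` (0-indexed), namely `c - a ∈ ℤ/nℤ`. -/
def res (n : ℕ) (x : ℕ × ℕ) : ZMod n := (x.2 : ZMod n) - (x.1 : ZMod n)

/-- The total order `≻` determined by the arm sequence `A` on the nodes of a fixed
residue: for distinct same-residue nodes `x = (a, c)` and `y = (b, d)`, if the axial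
distance `b - a + c - d` equals `n t` with `t ≥ 0` then `x ≻ y` iff `c - d > A t`, while
if `a - b + d - c = n t` with `t ≥ 0` then `x ≻ y` iff `d - c ≤ A t` (reading `A 0 = 0`). -/
def NodeGt (n : ℕ) (A : ℕ → ℤ) (x y : ℕ × ℕ) : Prop :=
  (∃ t : ℕ, (y.1 : ℤ) - x.1 + x.2 - y.2 = (n : ℤ) * t ∧ Aext A t < (x.2 : ℤ) - y.2) ∨
  (∃ t : ℕ, (x.1 : ℤ) - y.1 + y.2 - x.2 = (n : ℤ) * t ∧ (y.2 : ℤ) - x.2 ≤ Aext A t ∧ x ≠ y)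

/-- The (finite) set of addable and removable `i`-nodes of `l`. -/
noncomputable def ARset (n : ℕ) (l : ℕ → ℕ) (i : ZMod n) : Finset (ℕ × ℕ) :=
  ((Finset.range (conj l 0 + 1)) ×ˢ (Finset.range (l 0 + 1))).filter
    (fun x => res n x = i ∧ (Addable l x.1 x.2 ∨ Removable l x.1 x.2))

/-- The sign of a node in the ±-sequence: `+1` if addable, `-1` if removable. -/
noncomputable def sgnNode (l : ℕ → ℕ) (x : ℕ × ℕ) : ℤ :=
  if Addable l x.1 x.2 then 1 else if Removable l x.1 x.2 then -1 else 0

/-- Minus the partial sum of signs over the addable/removable `i`-nodes `y ⪰ x`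
(the prefix of the ±-sequence ending at `x`, the nodes being listed in decreasing
`≻`-order). -/
noncomputable def Gnode (n : ℕ) (A : ℕ → ℤ) (l : ℕ → ℕ) (i : ZMod n) (x : ℕ × ℕ) : ℤ :=
  -(∑ y ∈ (ARset n l i).filter (fun y => y = x ∨ NodeGt n A y x), sgnNode l y)

/-- The sum of signs over the addable/removable `i`-nodes `y ⪯ x` (the suffix of the
±-sequence starting at `x`). -/
noncomputable def Hnode (n : ℕ) (A : ℕ → ℤ) (l : ℕ → ℕ) (i : ZMod n) (x : ℕ × ℕ) : ℤ :=
  ∑ y ∈ (ARset n l i).filter (fun y => y = x ∨ NodeGt n A x y), sgnNode l y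

/-- `ε_i(λ)`: the maximum of `0` and the partial sums `Gnode`. -/
noncomputable def epsP (n : ℕ) (A : ℕ → ℤ) (l : ℕ → ℕ) (i : ZMod n) : ℤ :=
  (ARset n l i).fold max 0 (Gnode n A l i)

/-- `φ_i(λ)`: the maximum of `0` and the partial sums `Hnode`. -/
noncomputable def phiP (n : ℕ) (A : ℕ → ℤ) (l : ℕ → ℕ) (i : ZMod n) : ℤ :=
  (ARset n l i).fold max 0 (Hnode n A l i)

/-- The `i`-good node of `l`: the node in the good position of the ±-sequence, i.e. the
`≻`-greatest addable/removable `i`-node achieving `Gnode = ε_i > 0` (or `none`). -/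
noncomputable def goodNode (n : ℕ) (A : ℕ → ℤ) (l : ℕ → ℕ) (i : ZMod n) : Option (ℕ × ℕ) :=
  if hx : ∃ x ∈ ARset n l i, 0 < epsP n A l i ∧ Gnode n A l i x = epsP n A l i ∧
      ∀ y ∈ ARset n l i, NodeGt n A y x → Gnode n A l i y ≠ epsP n A l i
  then some hx.choose else none

/-- The `i`-cogood node of `l`: the node in the cogood position of the ±-sequence, i.e.
the `≻`-least addable/removable `i`-node achieving `Hnode = φ_i > 0` (or `none`). -/
noncomputable def cogoodNode (n : ℕ) (A : ℕ → ℤ) (l : ℕ → ℕ) (i : ZMod n) :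
    Option (ℕ × ℕ) :=
  if hx : ∃ x ∈ ARset n l i, 0 < phiP n A l i ∧ Hnode n A l i x = phiP n A l i ∧
      ∀ y ∈ ARset n l i, NodeGt n A x y → Hnode n A l i y ≠ phiP n A l i
  then some hx.choose else none

/-- The crystal operator `ẽ_i`: remove the `i`-good node (shorten its row by one), or
`none` (the ghost element `0`) if there is none. -/
noncomputable def et (n : ℕ) (A : ℕ → ℤ) (l : ℕ → ℕ) (i : ZMod n) : Option (ℕ → ℕ) :=
  (goodNode n A l i).map fun x => Function.update l x.1 (l x.1 - 1)

/-- The crystal operator `f̃_i`: add the `i`-cogood node (lengthen its row by one), or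
`none` (the ghost element `0`) if there is none. -/
noncomputable def ft (n : ℕ) (A : ℕ → ℤ) (l : ℕ → ℕ) (i : ZMod n) : Option (ℕ → ℕ) :=
  (cogoodNode n A l i).map fun x => Function.update l x.1 (l x.1 + 1)
section Auxiliary

/-! ### Basic facts about `Aext` -/

lemma Aext_zero (A : ℕ → ℤ) : Aext A 0 = 0 := rfl

lemma Aext_pos (A : ℕ → ℤ) {t : ℕ} (h : t ≠ 0) : Aext A t = A t := if_neg h

lemma Aext_lb {n : ℕ} {A : ℕ → ℤ} (hA : IsArmSeq n A) (t : ℕ) : (t : ℤ) - 1 ≤ Aext A t := by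
  rcases Nat.eq_zero_or_pos t with rfl | ht
  · simp [Aext_zero]
  · rw [Aext_pos A (by omega)]
    exact (hA.1 t ht).1

lemma Aext_ub {n : ℕ} {A : ℕ → ℤ} (hA : IsArmSeq n A) (t : ℕ) :
    Aext A t ≤ ((n : ℤ) - 1) * t := by
  rcases Nat.eq_zero_or_pos t with rfl | ht
  · simp [Aext_zero]
  · rw [Aext_pos A (by omega)]
    exact (hA.1 t ht).2

lemma Aext_add_le {n : ℕ} {A : ℕ → ℤ} (hA : IsArmSeq n A) (t u : ℕ) :
    Aext A t + Aext A u ≤ Aext A (t + u) := by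
  rcases Nat.eq_zero_or_pos t with rfl | ht
  · simp [Aext_zero]
  rcases Nat.eq_zero_or_pos u with rfl | hu
  · simp [Aext_zero]
  rw [Aext_pos A (by omega), Aext_pos A (by omega), Aext_pos A (by omega)]
  rcases hA.2 t u ht hu with h | h <;> omega

lemma Aext_le_add {n : ℕ} {A : ℕ → ℤ} (hA : IsArmSeq n A) (t u : ℕ) :
    Aext A (t + u) ≤ Aext A t + Aext A u + 1 := by
  rcases Nat.eq_zero_or_pos t with rfl | ht
  · simp [Aext_zero]
  rcases Nat.eq_zero_or_pos u with rfl | hu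
  · simp [Aext_zero]
  rw [Aext_pos A (by omega), Aext_pos A (by omega), Aext_pos A (by omega)]
  rcases hA.2 t u ht hu with h | h <;> omega

lemma mul_Aext_le {n : ℕ} {A : ℕ → ℤ} (hA : IsArmSeq n A) (k m : ℕ) :
    (k : ℤ) * Aext A m ≤ Aext A (k * m) := by
  induction k with
  | zero => simp [Aext_zero]
  | succ k ih =>
    have h := Aext_add_le hA (k * m) m
    have : (k + 1) * m = k * m + m := by ring
    rw [this]
    push_cast
    linarith

lemma Aext_mul_le {n : ℕ} {A : ℕ → ℤ} (hA : IsArmSeq n A) {k : ℕ} (m : ℕ) (hk : 1 ≤ k) :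
    Aext A (k * m) ≤ (k : ℤ) * Aext A m + k - 1 := by
  induction k with
  | zero => omega
  | succ k ih =>
    rcases Nat.eq_zero_or_pos k with rfl | hk'
    · simp
    · have h := Aext_le_add hA (k * m) m
      have he : (k + 1) * m = k * m + m := by ring
      rw [he]
      have := ih hk'
      push_cast
      push_cast at this
      linarith

lemma Aext_cross {n : ℕ} {A : ℕ → ℤ} (hA : IsArmSeq n A) (t : ℕ) {u : ℕ} (hu : 1 ≤ u) :
    (t : ℤ) * Aext A u ≤ (u : ℤ) * Aext A t + u - 1 := by
  have h1 := mul_Aext_le hA t u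
  have h2 := Aext_mul_le hA t hu
  rw [show u * t = t * u by ring] at h2
  linarith

/-! ### Fold-max and maximal-element helpers -/

lemma le_fold_max {β : Type*} {s : Finset β} (f : β → ℤ) (b : ℤ) :
    ∀ x ∈ s, f x ≤ s.fold max b f := by
  classical
  induction s using Finset.induction_on with
  | empty => simp
  | @insert a s' ha ih =>
    intro x hx
    rw [Finset.fold_insert ha]
    rcases Finset.mem_insert.1 hx with rfl | hx'
    · exact le_max_left _ _
    · exact (ih x hx').trans (le_max_right _ _)

lemma fold_max_eq {β : Type*} (s : Finset β) (f : β → ℤ) (b : ℤ) :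
    s.fold max b f = b ∨ ∃ x ∈ s, s.fold max b f = f x := by
  classical
  induction s using Finset.induction_on with
  | empty => left; simp
  | @insert a s' ha ih =>
    rw [Finset.fold_insert ha]
    rcases max_choice (f a) (s'.fold max b f) with h | h
    · right; exact ⟨a, Finset.mem_insert_self _ _, h⟩
    · rw [h]
      rcases ih with h' | ⟨x, hx, hx'⟩
      · left; exact h'
      · right; exact ⟨x, Finset.mem_insert_of_mem hx, hx'⟩

lemma exists_maximal {β : Type*} {r : β → β → Prop}
    (htr : ∀ {a b c : β}, r a b → r b c → r a c) (hirr : ∀ a, ¬ r a a)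
    (S : Finset β) (hS : S.Nonempty) : ∃ x ∈ S, ∀ y ∈ S, ¬ r y x := by
  classical
  induction S using Finset.induction_on with
  | empty => exact absurd hS (by simp)
  | @insert a s ha ih =>
    rcases s.eq_empty_or_nonempty with rfl | hs
    · refine ⟨a, Finset.mem_insert_self _ _, ?_⟩
      intro y hy
      rcases Finset.mem_insert.1 hy with rfl | h
      · exact hirr _
      · simp at h
    · obtain ⟨x, hxs, hmax⟩ := ih hs
      by_cases hax : r a x
      · refine ⟨a, Finset.mem_insert_self _ _, ?_⟩
        intro y hy hya
        rcases Finset.mem_insert.1 hy with rfl | hys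
        · exact hirr _ hya
        · exact hmax y hys (htr hya hax)
      · refine ⟨x, Finset.mem_insert_of_mem hxs, ?_⟩
        intro y hy hyx
        rcases Finset.mem_insert.1 hy with rfl | hys
        · exact hax hyx
        · exact hmax y hys hyx

/-! ### Partition basics -/

lemma l_anti {l : ℕ → ℕ} (hl : IsPartition l) : Antitone l :=
  antitone_nat_of_succ_le hl.1

lemma conj_eq_of {l : ℕ → ℕ} {c v : ℕ} (h1 : l v ≤ c) (h2 : ∀ e, e < v → c < l e) :
    conj l c = v := by
  rw [conj]
  refine le_antisymm (Nat.sInf_le h1) ?_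
  by_contra h
  push_neg at h
  have hm : l (sInf {a | l a ≤ c}) ≤ c := Nat.sInf_mem (⟨v, h1⟩ : Set.Nonempty {a | l a ≤ c})
  have := h2 _ h
  omega

lemma lt_conj_of {l : ℕ → ℕ} (hl : IsPartition l) {a c : ℕ} (h : c < l a) :
    a < conj l c := by
  rw [conj]
  by_contra hle
  push_neg at hle
  obtain ⟨N, hN⟩ := hl.2
  have hne : Set.Nonempty {e | l e ≤ c} := ⟨N, by simp [hN]⟩
  have hm : l (sInf {e | l e ≤ c}) ≤ c := Nat.sInf_mem hne
  have := l_anti hl hle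
  omega

lemma mem_ARset {n : ℕ} {l : ℕ → ℕ} (hl : IsPartition l) (x : ℕ × ℕ)
    (h : Addable l x.1 x.2 ∨ Removable l x.1 x.2) : x ∈ ARset n l (res n x) := by
  rw [ARset, Finset.mem_filter, Finset.mem_product, Finset.mem_range, Finset.mem_range]
  refine ⟨⟨?_, ?_⟩, rfl, h⟩
  · rcases h with ⟨h1, h2⟩ | ⟨h1, h2⟩
    · rcases h2 with h2 | h2
      · omega
      · have h3 : 0 < l (x.1 - 1) := by omega
        have := lt_conj_of hl (c := 0) h3
        omega
    · have h3 : 0 < l x.1 := by omega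
      have := lt_conj_of hl (c := 0) h3
      omega
  · rcases h with ⟨h1, _⟩ | ⟨h1, _⟩ <;>
    · have : l x.1 ≤ l 0 := l_anti hl (Nat.zero_le _)
      omega

end Auxiliary
section OrderLemmas

/-- The threshold function of the order `≻` on a fixed residue class. -/
noncomputable def theta (n : ℕ) (A : ℕ → ℤ) (m : ℤ) : ℤ :=
  if 0 ≤ m then Aext A (m / n).toNat else -(Aext A ((-m) / n).toNat) - 1

lemma theta_rep_nonneg {n : ℕ} (A : ℕ → ℤ) (hn : 0 < n) {m : ℤ} (hd : (n : ℤ) ∣ m)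
    (hm : 0 ≤ m) : ∃ t : ℕ, m = (n : ℤ) * t ∧ theta n A m = Aext A t := by
  obtain ⟨k, hk⟩ := hd
  have hn' : (0 : ℤ) < n := by exact_mod_cast hn
  have hk0 : 0 ≤ k := by
    by_contra h
    push_neg at h
    nlinarith
  refine ⟨k.toNat, ?_, ?_⟩
  · rw [hk, Int.toNat_of_nonneg hk0]
  · rw [theta, if_pos hm, hk, Int.mul_ediv_cancel_left _ (by positivity)]

lemma theta_rep_neg {n : ℕ} (A : ℕ → ℤ) (hn : 0 < n) {m : ℤ} (hd : (n : ℤ) ∣ m)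
    (hm : m < 0) :
    ∃ t : ℕ, 1 ≤ t ∧ m = -((n : ℤ) * t) ∧ theta n A m = -(Aext A t) - 1 := by
  obtain ⟨k, hk⟩ := hd
  have hn' : (0 : ℤ) < n := by exact_mod_cast hn
  have hk0 : k < 0 := by
    by_contra h
    push_neg at h
    nlinarith
  refine ⟨(-k).toNat, ?_, ?_, ?_⟩
  · have : 1 ≤ -k := by omega
    omega
  · rw [hk, Int.toNat_of_nonneg (by omega)]
    ring
  · rw [theta, if_neg (by omega), hk, show -((n:ℤ) * k) = (n:ℤ) * (-k) by ring,
      Int.mul_ediv_cancel_left _ (by positivity)]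

lemma theta_zero {n : ℕ} (A : ℕ → ℤ) : theta n A 0 = 0 := by
  rw [theta, if_pos le_rfl]
  norm_num
  rfl

lemma theta_add_le {n : ℕ} {A : ℕ → ℤ} (hn : 0 < n) (hA : IsArmSeq n A) {m1 m2 : ℤ}
    (h1 : (n : ℤ) ∣ m1) (h2 : (n : ℤ) ∣ m2) :
    theta n A (m1 + m2) ≤ theta n A m1 + theta n A m2 + 1 := by
  have hn' : (0 : ℤ) < n := by exact_mod_cast hn
  have hcancel : ∀ {p q : ℕ}, (n : ℤ) * p = (n : ℤ) * q → p = q := by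
    intro p q h
    have := mul_left_cancel₀ (by positivity : (n:ℤ) ≠ 0) h
    exact_mod_cast this
  rcases le_or_gt 0 m1 with hs1 | hs1 <;> rcases le_or_gt 0 m2 with hs2 | hs2
  · obtain ⟨t1, he1, ht1⟩ := theta_rep_nonneg A hn h1 hs1
    obtain ⟨t2, he2, ht2⟩ := theta_rep_nonneg A hn h2 hs2
    obtain ⟨t3, he3, ht3⟩ := theta_rep_nonneg A hn (dvd_add h1 h2) (by omega)
    have h3 : t3 = t1 + t2 := by
      apply hcancel
      push_cast
      rw [mul_add, ← he1, ← he2, ← he3]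
    rw [ht1, ht2, ht3, h3]
    exact Aext_le_add hA t1 t2
  · obtain ⟨t1, he1, ht1⟩ := theta_rep_nonneg A hn h1 hs1
    obtain ⟨t2, hp2, he2, ht2⟩ := theta_rep_neg A hn h2 hs2
    rcases le_or_gt 0 (m1 + m2) with hs3 | hs3
    · obtain ⟨t3, he3, ht3⟩ := theta_rep_nonneg A hn (dvd_add h1 h2) hs3
      have h3 : t1 = t2 + t3 := by
        apply hcancel
        push_cast
        rw [mul_add, ← he3]
        omega
      rw [ht1, ht2, ht3, h3]
      have := Aext_add_le hA t2 t3
      omega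
    · obtain ⟨t3, hp3, he3, ht3⟩ := theta_rep_neg A hn (dvd_add h1 h2) hs3
      have h3 : t2 = t1 + t3 := by
        apply hcancel
        push_cast
        rw [mul_add, ← he1]
        omega
      rw [ht1, ht2, ht3, h3]
      have := Aext_le_add hA t1 t3
      omega
  · obtain ⟨t1, hp1, he1, ht1⟩ := theta_rep_neg A hn h1 hs1
    obtain ⟨t2, he2, ht2⟩ := theta_rep_nonneg A hn h2 hs2
    rcases le_or_gt 0 (m1 + m2) with hs3 | hs3
    · obtain ⟨t3, he3, ht3⟩ := theta_rep_nonneg A hn (dvd_add h1 h2) hs3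
      have h3 : t2 = t1 + t3 := by
        apply hcancel
        push_cast
        rw [mul_add, ← he2]
        omega
      rw [ht1, ht2, ht3, h3]
      have := Aext_add_le hA t1 t3
      omega
    · obtain ⟨t3, hp3, he3, ht3⟩ := theta_rep_neg A hn (dvd_add h1 h2) hs3
      have h3 : t1 = t2 + t3 := by
        apply hcancel
        push_cast
        rw [mul_add, ← he2]
        omega
      rw [ht1, ht2, ht3, h3]
      have := Aext_le_add hA t2 t3
      omega
  · obtain ⟨t1, hp1, he1, ht1⟩ := theta_rep_neg A hn h1 hs1
    obtain ⟨t2, hp2, he2, ht2⟩ := theta_rep_neg A hn h2 hs2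
    obtain ⟨t3, hp3, he3, ht3⟩ := theta_rep_neg A hn (dvd_add h1 h2) (by omega)
    have h3 : t3 = t1 + t2 := by
      apply hcancel
      push_cast
      rw [mul_add]
      omega
    rw [ht1, ht2, ht3, h3]
    have := Aext_add_le hA t1 t2
    omega


lemma nodeGt_iff {n : ℕ} (hn : 0 < n) (A : ℕ → ℤ) (x y : ℕ × ℕ) :
    NodeGt n A x y ↔ ((n : ℤ) ∣ ((y.1 : ℤ) - x.1 + x.2 - y.2) ∧
      theta n A ((y.1 : ℤ) - x.1 + x.2 - y.2) < (x.2 : ℤ) - y.2) := by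
  have hn' : (0 : ℤ) < n := by exact_mod_cast hn
  have hcancel : ∀ {p q : ℕ}, (n : ℤ) * p = (n : ℤ) * q → p = q := by
    intro p q h
    have := mul_left_cancel₀ (by positivity : (n:ℤ) ≠ 0) h
    exact_mod_cast this
  constructor
  · rintro (⟨t, ht, harm⟩ | ⟨t, ht, harm, hne⟩)
    · have hd : (n : ℤ) ∣ ((y.1 : ℤ) - x.1 + x.2 - y.2) := ⟨t, ht⟩
      refine ⟨hd, ?_⟩
      obtain ⟨t', he', hth⟩ := theta_rep_nonneg A hn hd (by rw [ht]; positivity)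
      have : t' = t := hcancel (by rw [← he', ← ht])
      rw [hth, this]
      exact harm
    · have hd : (n : ℤ) ∣ ((y.1 : ℤ) - x.1 + x.2 - y.2) := ⟨-t, by linarith⟩
      refine ⟨hd, ?_⟩
      rcases Nat.eq_zero_or_pos t with rfl | hpt
      · have hD0 : (y.1 : ℤ) - x.1 + x.2 - y.2 = 0 := by push_cast at ht ⊢; linarith
        rw [hD0, theta_zero]
        rw [Aext_zero] at harm
        rcases lt_or_ge 0 ((x.2 : ℤ) - y.2) with h | h
        · exact h
        · exfalso
          have h2 : x.2 = y.2 := by omega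
          have h1 : x.1 = y.1 := by omega
          exact hne (Prod.ext h1 h2)
      · have hDneg : (y.1 : ℤ) - x.1 + x.2 - y.2 < 0 := by
          have : (n : ℤ) * 1 ≤ (n : ℤ) * t := by
            apply mul_le_mul_of_nonneg_left _ (le_of_lt hn')
            exact_mod_cast hpt
          linarith
        obtain ⟨t'', hp'', he'', hth''⟩ := theta_rep_neg A hn hd hDneg
        have : t'' = t := hcancel (by omega)
        rw [hth'', this]
        linarith
  · rintro ⟨hd, hth⟩
    rcases le_or_gt 0 ((y.1 : ℤ) - x.1 + x.2 - y.2) with hs | hs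
    · obtain ⟨t, he, hteq⟩ := theta_rep_nonneg A hn hd hs
      exact Or.inl ⟨t, he, by rw [hteq] at hth; exact hth⟩
    · obtain ⟨t, hp, he, hteq⟩ := theta_rep_neg A hn hd hs
      refine Or.inr ⟨t, by linarith, by rw [hteq] at hth; linarith, ?_⟩
      intro hxy
      rw [hxy] at hs
      simp at hs

lemma nodeGt_irrefl {n : ℕ} (hn : 0 < n) (A : ℕ → ℤ) (x : ℕ × ℕ) : ¬ NodeGt n A x x := by
  rw [nodeGt_iff hn]
  rintro ⟨-, h⟩
  have h0 : (x.1 : ℤ) - x.1 + x.2 - x.2 = 0 := by ring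
  rw [h0, theta_zero] at h
  omega

lemma nodeGt_trans {n : ℕ} (hn : 0 < n) {A : ℕ → ℤ} (hA : IsArmSeq n A) {x y z : ℕ × ℕ} :
    NodeGt n A x y → NodeGt n A y z → NodeGt n A x z := by
  rw [nodeGt_iff hn, nodeGt_iff hn, nodeGt_iff hn]
  rintro ⟨d1, h1⟩ ⟨d2, h2⟩
  have hD : (z.1 : ℤ) - x.1 + x.2 - z.2 =
      ((y.1 : ℤ) - x.1 + x.2 - y.2) + ((z.1 : ℤ) - y.1 + y.2 - z.2) := by ring
  refine ⟨by rw [hD]; exact dvd_add d1 d2, ?_⟩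
  have hadd := theta_add_le hn hA d1 d2
  rw [hD]
  linarith

end OrderLemmas
section MainLemmas

/-- The integer key compatible with the order `≻` used to pick an extremal removable node. -/
noncomputable def gkey (n u : ℕ) (A : ℕ → ℤ) (z : ℕ × ℕ) : ℤ :=
  ((n : ℤ) * u - A u) * z.2 + A u * z.1

/-- If an addable node is `≻`-greater than a removable node of the same residue, its key
exceeds the removable node's key by a large margin (using `A`-regularity). -/
lemma margin_lemma {n : ℕ} {A : ℕ → ℤ} {l : ℕ → ℕ} (hn : 3 ≤ n) (hA : IsArmSeq n A)
    (hl : IsPartition l) (hreg : ARegular n A l) {a c b d T : ℕ} (hT : 1 ≤ T)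
    (hrem : Removable l a c) (hadd : Addable l b d)
    (hgt : NodeGt n A (b, d) (a, c))
    (hbc : (b : ℤ) + c ≤ (n : ℤ) * T) :
    gkey n (n * T) A (a, c) + A (n * T) < gkey n (n * T) A (b, d) ∧
      gkey n (n * T) A (a, c) + ((n : ℤ) * (n * T) - A (n * T)) < gkey n (n * T) A (b, d) := by
  have hmono := l_anti hl
  have hn0 : (0 : ℤ) < n := by exact_mod_cast (by omega : 0 < n)
  have hn3 : (3 : ℤ) ≤ n := by exact_mod_cast hn
  set u := n * T with hu
  have hu1 : 1 ≤ u := by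
    have := Nat.mul_pos (show 0 < n by omega) (show 0 < T by omega)
    omega
  have huz : (1 : ℤ) ≤ u := by exact_mod_cast hu1
  have huc : (u : ℤ) = (n : ℤ) * T := by rw [hu]; push_cast; ring
  have huc2 : (n : ℤ) * ((n : ℤ) * T) = (n : ℤ) * u := by rw [huc]
  have hQlb : (u : ℤ) - 1 ≤ A u := (hA.1 u hu1).1
  have hQub : A u ≤ ((n : ℤ) - 1) * u := (hA.1 u hu1).2
  have hab1 : l (a + 1) ≤ c := hrem.2
  have hac : l a = c + 1 := hrem.1
  have hbd : l b = d := hadd.1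
  rcases hgt with ⟨t, heq, harm⟩ | ⟨t, heq, harm, hnexy⟩
  · -- case A : a - b + d - c = n t, A t < d - c ; here b < a
    simp only at heq harm
    have ht1 : 1 ≤ t := by
      by_contra h
      have ht0 : t = 0 := by omega
      subst ht0
      rw [Aext_zero] at harm
      rw [Nat.cast_zero, mul_zero] at heq
      have hab : a < b := by omega
      have h1 : l b ≤ l (a + 1) := hmono (by omega)
      omega
    have ht1' : (1 : ℤ) ≤ t := by exact_mod_cast ht1
    rw [Aext_pos A (by omega)] at harm
    have hAtlb : (t : ℤ) - 1 ≤ A t := (hA.1 t ht1).1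
    have hnt3 : (3 : ℤ) ≤ (n : ℤ) * t := by
      calc (3:ℤ) ≤ (n : ℤ) * 1 := by linarith
      _ ≤ (n : ℤ) * t := by
        apply mul_le_mul_of_nonneg_left _ (le_of_lt hn0)
        exact ht1'
    have hdc : (c : ℤ) < d := by linarith
    have hba : b < a := by
      rcases lt_trichotomy a b with h | h | h
      · exfalso
        have h1 : l b ≤ l (a + 1) := hmono (by omega)
        omega
      · exfalso
        subst h
        have hd1 : d = c + 1 := by omega
        subst hd1
        push_cast at heq
        linarith
      · exact h
    have hconj : conj l c = a + 1 := conj_eq_of hab1 (fun e he => by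
      have : l a ≤ l e := hmono (by omega)
      omega)
    have hstrict : (d : ℤ) - c ≠ A t + 1 := by
      intro hil
      refine hreg ⟨b, c, t, ht1, by omega, ?_, ?_⟩
      · rw [hconj, hbd]
        push_cast
        linarith
      · rw [hbd]
        linarith
    have hge2 : A t + 2 ≤ (d : ℤ) - c := by
      rcases eq_or_lt_of_le (show A t + 1 ≤ (d : ℤ) - c by linarith) with h | h
      · exact absurd h.symm hstrict
      · linarith
    have hcross : (t : ℤ) * A u ≤ (u : ℤ) * A t + u - 1 := by
      have h := Aext_cross hA t hu1
      rwa [Aext_pos A (by omega), Aext_pos A (by omega)] at h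
    have e1 : ((n : ℤ) * u) * (A t + 2) ≤ ((n : ℤ) * u) * ((d : ℤ) - c) :=
      mul_le_mul_of_nonneg_left hge2 (by positivity)
    have e2 : (n : ℤ) * ((t : ℤ) * A u) ≤ (n : ℤ) * ((u : ℤ) * A t + u - 1) :=
      mul_le_mul_of_nonneg_left hcross (le_of_lt hn0)
    have key : gkey n u A (b, d) - gkey n u A (a, c) =
        ((n : ℤ) * u) * ((d : ℤ) - c) - (n : ℤ) * ((t : ℤ) * A u) := by
      simp only [gkey]
      linear_combination (-(A u)) * heq
    constructor
    · linarith [key, e1, e2]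
    · linarith [key, e1, e2, huc2]
  · -- case B : b - a + c - d = n t, c - d ≤ A t ; here a < b
    simp only at heq harm hnexy
    have ht1 : 1 ≤ t := by
      by_contra h
      have ht0 : t = 0 := by omega
      subst ht0
      rw [Aext_zero] at harm
      rw [Nat.cast_zero, mul_zero] at heq
      rcases lt_trichotomy a b with h' | h' | h'
      · have h1 : l b ≤ l (a + 1) := hmono (by omega)
        omega
      · subst h'
        omega
      · have h1 : l a ≤ l b := hmono (by omega)
        omega
    have ht1' : (1 : ℤ) ≤ t := by exact_mod_cast ht1
    rw [Aext_pos A (by omega)] at harm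
    have hAtlb : (t : ℤ) - 1 ≤ A t := (hA.1 t ht1).1
    have hnt3 : (3 : ℤ) ≤ (n : ℤ) * t := by
      calc (3:ℤ) ≤ (n : ℤ) * 1 := by linarith
      _ ≤ (n : ℤ) * t := by
        apply mul_le_mul_of_nonneg_left _ (le_of_lt hn0)
        exact ht1'
    have hba : a < b := by
      by_contra h
      push_neg at h
      have h1 : l a ≤ l b := hmono h
      omega
    have hdc : d ≤ c := by
      have h1 : l b ≤ l (a + 1) := hmono (by omega)
      omega
    have hconj : conj l d = b := by
      rcases hadd.2 with h | h
      · omega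
      · exact conj_eq_of (le_of_eq hbd) (fun e he => by
          have : l (b - 1) ≤ l e := hmono (by omega)
          omega)
    have hstrict : (c : ℤ) - d ≠ A t := by
      intro hil
      refine hreg ⟨a, d, t, ht1, by omega, ?_, ?_⟩
      · rw [hconj, hac]
        push_cast
        linarith
      · rw [hac]
        push_cast
        linarith
    have hle1 : (c : ℤ) - d ≤ A t - 1 := by
      rcases eq_or_lt_of_le harm with h | h
      · exact absurd h hstrict
      · linarith
    have hcross : (u : ℤ) * A t ≤ (t : ℤ) * A u + t - 1 := by
      have h := Aext_cross hA u (show 1 ≤ t from ht1)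
      rwa [Aext_pos A (by omega), Aext_pos A (by omega)] at h
    have htT : (n : ℤ) * t ≤ u := by
      rw [huc]
      have hb0 : (0 : ℤ) ≤ a := by positivity
      have hd0 : (0 : ℤ) ≤ d := by positivity
      linarith
    have e1 : ((n : ℤ) * u) * ((c : ℤ) - d) ≤ ((n : ℤ) * u) * (A t - 1) :=
      mul_le_mul_of_nonneg_left hle1 (by positivity)
    have e2 : (n : ℤ) * ((u : ℤ) * A t) ≤ (n : ℤ) * ((t : ℤ) * A u + t - 1) :=
      mul_le_mul_of_nonneg_left hcross (le_of_lt hn0)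
    have key : gkey n u A (b, d) - gkey n u A (a, c) =
        (-((n : ℤ) * u)) * ((c : ℤ) - d) + (n : ℤ) * ((t : ℤ) * A u) := by
      simp only [gkey]
      linear_combination (A u) * heq
    constructor
    · linarith [key, e1, e2]
    · linarith [key, e1, e2, huc2]

/-- From any addable node one finds a removable node whose key is not much smaller. -/
lemma addable_to_removable {n u : ℕ} {A : ℕ → ℤ} {l : ℕ → ℕ} (hl : IsPartition l)
    {b d : ℕ} (hadd : Addable l b d) (hl0 : 0 < l 0)
    (hQ0 : 0 ≤ A u) (hQu : A u ≤ (n : ℤ) * u) :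
    ∃ z : ℕ × ℕ, Removable l z.1 z.2 ∧
      (gkey n u A (b, d) ≤ gkey n u A z + A u ∨
        gkey n u A (b, d) ≤ gkey n u A z + ((n : ℤ) * u - A u)) := by
  have hmono := l_anti hl
  rcases Nat.eq_zero_or_pos b with rfl | hb
  · obtain ⟨N, hN⟩ := hl.2
    have hd : d = l 0 := hadd.1.symm
    subst hd
    have hset : Set.Nonempty {a | l a < l 0} := ⟨N, by simpa [hN] using hl0⟩
    set m := sInf {a | l a < l 0} with hm
    have hmem : l m < l 0 := Nat.sInf_mem hset
    have hm1 : 1 ≤ m := by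
      rcases Nat.eq_zero_or_pos m with h | h
      · rw [h] at hmem; omega
      · exact h
    have hpred : l 0 ≤ l (m - 1) := by
      by_contra hcon2
      push_neg at hcon2
      have hle := Nat.sInf_le (show m - 1 ∈ {a | l a < l 0} from hcon2)
      omega
    have hml : l (m - 1) = l 0 := le_antisymm (hmono (Nat.zero_le _)) hpred
    refine ⟨(m - 1, l 0 - 1), ⟨?_, ?_⟩, Or.inr ?_⟩
    · show l (m - 1) = l 0 - 1 + 1
      omega
    · show l (m - 1 + 1) ≤ l 0 - 1
      have he : m - 1 + 1 = m := by omega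
      rw [he]
      omega
    simp only [gkey]
    push_cast [Nat.cast_sub hl0, Nat.cast_sub hm1]
    have hmz : (1 : ℤ) ≤ m := by exact_mod_cast hm1
    nlinarith
  · obtain ⟨hbd, hca⟩ := hadd
    have hlt : d < l (b - 1) := by
      rcases hca with h | h
      · omega
      · exact h
    refine ⟨(b - 1, l (b - 1) - 1), ⟨?_, ?_⟩, Or.inl ?_⟩
    · show l (b - 1) = l (b - 1) - 1 + 1
      omega
    · show l (b - 1 + 1) ≤ l (b - 1) - 1
      have he : b - 1 + 1 = b := by omega
      rw [he]
      omega
    simp only [gkey]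
    have h1 : (1:ℕ) ≤ l (b-1) := by omega
    push_cast [Nat.cast_sub h1, Nat.cast_sub hb]
    have hd1 : (d : ℤ) ≤ (l (b - 1) : ℤ) - 1 := by exact_mod_cast (by omega : d ≤ l (b-1) - 1)
    nlinarith [mul_le_mul_of_nonneg_left hd1 (show (0:ℤ) ≤ (n:ℤ)*u - A u by linarith)]

end MainLemmas
/-- Proposition 5.3 of the paper: every nonempty `A`-regular partition has a good node
of some residue, i.e. `ẽ_i λ ≠ 0` for some `i ∈ ℤ/nℤ`. -/
theorem nonempty_partition_has_good_node (n : ℕ) (hn : 3 ≤ n)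
    (A : ℕ → ℤ) (hA : IsArmSeq n A) (l : ℕ → ℕ) (hl : IsPartition l)
    (hreg : ARegular n A l) (hne : ∃ a, l a ≠ 0) :
    ∃ i : ZMod n, et n A l i ≠ none := by
  by_contra hcon
  push_neg at hcon
  have hn0 : 0 < n := by omega
  have hmono := l_anti hl
  have hnotex : ∀ i : ZMod n, ¬ ∃ x ∈ ARset n l i, 0 < epsP n A l i ∧
      Gnode n A l i x = epsP n A l i ∧
      ∀ y ∈ ARset n l i, NodeGt n A y x → Gnode n A l i y ≠ epsP n A l i := by
    intro i hx
    have h := hcon i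
    rw [et, Option.map_eq_none_iff] at h
    rw [goodNode, dif_pos hx] at h
    exact Option.some_ne_none _ h
  have hG : ∀ (i : ZMod n), ∀ x ∈ ARset n l i, Gnode n A l i x ≤ 0 := by
    intro i x hx
    by_contra hpos
    push_neg at hpos
    have hle : Gnode n A l i x ≤ epsP n A l i := le_fold_max _ _ x hx
    have heps : 0 < epsP n A l i := lt_of_lt_of_le hpos hle
    rcases fold_max_eq (ARset n l i) (Gnode n A l i) 0 with h0 | ⟨z, hz, hzeq⟩
    · have hrfl : epsP n A l i = (ARset n l i).fold max 0 (Gnode n A l i) := rfl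
      omega
    · have hSne : ((ARset n l i).filter
          (fun w => Gnode n A l i w = epsP n A l i)).Nonempty :=
        ⟨z, Finset.mem_filter.2 ⟨hz, hzeq.symm⟩⟩
      obtain ⟨w, hwS, hwmax⟩ := exists_maximal (r := NodeGt n A)
        (fun h1 h2 => nodeGt_trans hn0 hA h1 h2) (nodeGt_irrefl hn0 A) _ hSne
      exact hnotex i ⟨w, (Finset.mem_filter.1 hwS).1, heps, (Finset.mem_filter.1 hwS).2,
        fun y hy hgt heqy => hwmax y (Finset.mem_filter.2 ⟨hy, heqy⟩) hgt⟩
  obtain ⟨a0, hne0⟩ := hne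
  have hl0 : 0 < l 0 := lt_of_lt_of_le (Nat.pos_of_ne_zero hne0) (hmono (Nat.zero_le a0))
  set T := conj l 0 + l 0 + 1 with hT
  have hT1 : 1 ≤ T := by omega
  set u := n * T with hu
  have hu1 : 1 ≤ u := by
    have := Nat.mul_pos (show 0 < n by omega) (show 0 < T by omega)
    omega
  have huz : (1 : ℤ) ≤ (u : ℤ) := by exact_mod_cast hu1
  have hQlb : (u : ℤ) - 1 ≤ A u := (hA.1 u hu1).1
  have hQub : A u ≤ ((n : ℤ) - 1) * u := (hA.1 u hu1).2
  have hQ0 : 0 ≤ A u := by linarith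
  have hQu : A u ≤ (n : ℤ) * u := by nlinarith
  set R := ((Finset.range (conj l 0 + 1)) ×ˢ (Finset.range (l 0 + 1))).filter
      (fun z => Removable l z.1 z.2) with hR
  have hmemR : ∀ z : ℕ × ℕ, Removable l z.1 z.2 → z ∈ R := by
    intro z hz
    rw [hR, Finset.mem_filter, Finset.mem_product, Finset.mem_range, Finset.mem_range]
    have h1 : 0 < l z.1 := by have := hz.1; omega
    have h2 := lt_conj_of hl (c := 0) h1
    have h3 : l z.1 ≤ l 0 := hmono (Nat.zero_le _)
    exact ⟨⟨by omega, by have := hz.1; omega⟩, hz⟩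
  have hRne : R.Nonempty := by
    obtain ⟨z0, hz0, -⟩ := addable_to_removable (n := n) (u := u) (A := A) hl
      (show Addable l 0 (l 0) from ⟨rfl, Or.inl rfl⟩) hl0 hQ0 hQu
    exact ⟨z0, hmemR z0 hz0⟩
  obtain ⟨x, hxR, hxmax⟩ := Finset.exists_max_image R (gkey n u A) hRne
  have hxrem : Removable l x.1 x.2 := by
    rw [hR, Finset.mem_filter] at hxR
    exact hxR.2
  have hxAR : x ∈ ARset n l (res n x) := mem_ARset hl x (Or.inr hxrem)
  set i := res n x with hi
  have hsgn : ∀ y ∈ (ARset n l i).filter (fun y => y = x ∨ NodeGt n A y x),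
      sgnNode l y = -1 := by
    intro y hy
    rw [Finset.mem_filter] at hy
    obtain ⟨hyAR, hycase⟩ := hy
    rw [ARset, Finset.mem_filter] at hyAR
    obtain ⟨hyrange, hyres, hyar⟩ := hyAR
    have hyadd : ¬ Addable l y.1 y.2 := by
      intro hadd
      rcases hycase with rfl | hgt
      · have h1 := hxrem.1
        have h2 := hadd.1
        omega
      · rw [Finset.mem_product, Finset.mem_range, Finset.mem_range] at hyrange
        have hxc1 : x.2 + 1 = l x.1 := by have := hxrem.1; omega
        have hxc2 : l x.1 ≤ l 0 := hmono (Nat.zero_le _)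
        have hbnat : y.1 + x.2 ≤ conj l 0 + l 0 := by omega
        have hTeq : ((conj l 0 : ℤ) + (l 0 : ℤ)) + 1 = T := by rw [hT]; push_cast; ring
        have hTn : (T : ℤ) ≤ (n : ℤ) * T :=
          le_mul_of_one_le_left (by positivity) (by exact_mod_cast (by omega : 1 ≤ n))
        have hb : (y.1 : ℤ) + x.2 ≤ (n : ℤ) * T := by
          have := (by exact_mod_cast hbnat : (y.1 : ℤ) + x.2 ≤ (conj l 0 : ℤ) + l 0)
          linarith
        have hmarg := margin_lemma hn hA hl hreg hT1 hxrem hadd hgt hb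
        rw [← hu] at hmarg
        simp only [Prod.mk.eta] at hmarg
        obtain ⟨z, hzrem, hzcase⟩ := addable_to_removable hl hadd hl0 hQ0 hQu
        have hzle : gkey n u A z ≤ gkey n u A x := hxmax z (hmemR z hzrem)
        simp only [Prod.mk.eta] at hzcase
        have huc2 : (n : ℤ) * ((n : ℤ) * (T : ℤ)) = (n : ℤ) * (u : ℤ) := by
          rw [hu]; push_cast; ring
        rcases hzcase with h | h
        · have := hmarg.1
          linarith
        · have := hmarg.2
          linarith
    have hyrem : Removable l y.1 y.2 := by
      rcases hyar with h | h
      · exact absurd h hyadd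
      · exact h
    rw [sgnNode, if_neg hyadd, if_pos hyrem]
  have hxP : x ∈ (ARset n l i).filter (fun y => y = x ∨ NodeGt n A y x) :=
    Finset.mem_filter.2 ⟨hxAR, Or.inl rfl⟩
  have hsum : ∑ y ∈ (ARset n l i).filter (fun y => y = x ∨ NodeGt n A y x), sgnNode l y
      = -((((ARset n l i).filter (fun y => y = x ∨ NodeGt n A y x)).card : ℤ)) := by
    rw [Finset.sum_congr rfl hsgn, Finset.sum_const]
    simp
  have hcard : 0 < ((ARset n l i).filter (fun y => y = x ∨ NodeGt n A y x)).card :=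
    Finset.card_pos.2 ⟨x, hxP⟩
  have hGx := hG i x hxAR
  rw [Gnode, hsum] at hGx
  omega
end ArmCrystal
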